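/- arXiv:1001.3332 — 7 statements merged into one kernel-verified Lean document; each statement's English description precedes it below -/
import Mathlib

section
/- Let F be a finite family of axis-parallel rectangles that is triangle-free, i.e., no three rectangles of F pairwise intersect. Then F can be partitioned into two subfamilies F1 and F2 such that no two rectangles of F1 cross each other and no two rectangles of F2 cross each other. -/
/-- An axis-parallel rectangle `[a,b] × [c,d]` with `a < b` and `c < d`. -/
structure AxisRect where
  a : ℝ
  b : ℝ
  c : ℝ
  d : ℝ
  hab : a < b
  hcd : c < d

/-- The x-projection of an axis-parallel rectangle. -/
def AxisRect.X (R : AxisRect) : Set ℝ := Set.Icc R.a R.b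

/-- The y-projection of an axis-parallel rectangle. -/
def AxisRect.Y (R : AxisRect) : Set ℝ := Set.Icc R.c R.d

/-- The rectangle as a subset of the plane `ℝ × ℝ`. -/
def AxisRect.toSet (R : AxisRect) : Set (ℝ × ℝ) := R.X ×ˢ R.Y

/-- The four corners of an axis-parallel rectangle. -/
def AxisRect.corners (R : AxisRect) : Set (ℝ × ℝ) :=
  ({R.a, R.b} : Set ℝ) ×ˢ ({R.c, R.d} : Set ℝ)

/-- Two rectangles cross: one x-projection is strictly contained in the other while the
y-projections are strictly contained the other way around. -/
def AxisRect.Cross (R S : AxisRect) : Prop :=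
  (R.X ⊂ S.X ∧ S.Y ⊂ R.Y) ∨ (S.X ⊂ R.X ∧ R.Y ⊂ S.Y)

/-- Two rectangles are in general position: all endpoints of the x-projections are distinct,
and all endpoints of the y-projections are distinct. -/
def GenPosPair (R S : AxisRect) : Prop :=
  R.a ≠ S.a ∧ R.a ≠ S.b ∧ R.b ≠ S.a ∧ R.b ≠ S.b ∧
  R.c ≠ S.c ∧ R.c ≠ S.d ∧ R.d ≠ S.c ∧ R.d ≠ S.d

/-- The crossing order: `R` is below `S`. -/
def AxisRect.CLt (R S : AxisRect) : Prop := R.X ⊂ S.X ∧ S.Y ⊂ R.Y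

lemma AxisRect.CLt.trans {R S T : AxisRect} (h1 : R.CLt S) (h2 : S.CLt T) : R.CLt T :=
  ⟨h1.1.trans h2.1, h2.2.trans h1.2⟩

lemma AxisRect.CLt.irrefl (R : AxisRect) : ¬ R.CLt R := fun h => h.1.ne rfl

lemma AxisRect.CLt.inter {R S : AxisRect} (h : R.CLt S) :
    (R.toSet ∩ S.toSet).Nonempty := by
  refine ⟨(R.a, S.c), ?_, ?_⟩
  · exact ⟨⟨le_refl _, R.hab.le⟩, h.2.subset ⟨le_refl _, S.hcd.le⟩⟩
  · exact ⟨h.1.subset ⟨le_refl _, R.hab.le⟩, ⟨le_refl _, S.hcd.le⟩⟩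

/-- **Non-crossing partition.** Any finite triangle-free family of axis-parallel rectangles
can be partitioned into two subfamilies, each containing no two crossing rectangles. -/
theorem noncrossing_partition (n : ℕ) (R : Fin n → AxisRect)
    (htf : ∀ i j k : Fin n, i ≠ j → i ≠ k → j ≠ k →
      ¬(((R i).toSet ∩ (R j).toSet).Nonempty ∧
        ((R i).toSet ∩ (R k).toSet).Nonempty ∧
        ((R j).toSet ∩ (R k).toSet).Nonempty)) :
    ∃ S : Finset (Fin n),
      (∀ i ∈ S, ∀ j ∈ S, ¬ AxisRect.Cross (R i) (R j)) ∧
      (∀ i ∈ Sᶜ, ∀ j ∈ Sᶜ, ¬ AxisRect.Cross (R i) (R j)) := by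
  classical
  refine ⟨Finset.univ.filter (fun i => ∀ j, ¬ (R j).CLt (R i)), ?_, ?_⟩
  · intro i hi j hj hc
    simp only [Finset.mem_filter] at hi hj
    rcases hc with h | h
    · exact hj.2 i h
    · exact hi.2 j h
  · intro i hi k hk hc
    simp only [Finset.mem_compl, Finset.mem_filter, Finset.mem_univ, true_and,
      not_forall, not_not] at hi hk
    -- wlog: R i CLt R k
    rcases hc with h | h
    · obtain ⟨j, hj⟩ := hi
      have hjk : (R j).CLt (R k) := hj.trans h
      have hij : i ≠ j := fun e => (AxisRect.CLt.irrefl _) (e ▸ hj)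
      have hik : i ≠ k := fun e => (AxisRect.CLt.irrefl _) (e ▸ h)
      have hjk' : j ≠ k := fun e => (AxisRect.CLt.irrefl _) (e ▸ hjk)
      exact htf i j k hij hik hjk' ⟨(Set.inter_comm _ _ ▸ AxisRect.CLt.inter hj), AxisRect.CLt.inter h, AxisRect.CLt.inter hjk⟩
    · obtain ⟨j, hj⟩ := hk
      have hjk : (R j).CLt (R i) := hj.trans h
      have hij : k ≠ j := fun e => (AxisRect.CLt.irrefl _) (e ▸ hj)
      have hik : k ≠ i := fun e => (AxisRect.CLt.irrefl _) (e ▸ h)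
      have hjk' : j ≠ i := fun e => (AxisRect.CLt.irrefl _) (e ▸ hjk)
      exact htf k j i hij hik hjk' ⟨(Set.inter_comm _ _ ▸ AxisRect.CLt.inter hj), AxisRect.CLt.inter h, AxisRect.CLt.inter hjk⟩
end

section
/- Let G be a finite simple graph with n vertices whose minimum vertex cover size opt satisfies n ≤ 2·opt. Let k ≥ 1 be an integer, let c1 > 0 be a rational number, and let U1, …, Uk ⊆ V(G) be vertex subsets with U1 ∪ ⋯ ∪ Uk = V(G) and Σᵢ |Uᵢ| ≤ c1·n. For each i, let Cᵢ be a minimum vertex cover of the induced subgraph G − Uᵢ = G[V(G) \ Uᵢ]. Then each set Uᵢ ∪ Cᵢ is a vertex cover of G, and there exists an index i with |Uᵢ ∪ Cᵢ| ≤ (1 + 2·c1/k)·opt. -/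
/-- `C` is a vertex cover of the subgraph of `G` induced by `S`: it consists of vertices of
`S` and covers every edge of `G` with both endpoints in `S`. -/
def IsVCOn {V : Type*} (G : SimpleGraph V) (S C : Finset V) : Prop :=
  C ⊆ S ∧ ∀ u v : V, G.Adj u v → u ∈ S → v ∈ S → u ∈ C ∨ v ∈ C

/-- The minimum cardinality of a vertex cover of the subgraph of `G` induced by `S`. -/
noncomputable def vcOn {V : Type*} (G : SimpleGraph V) (S : Finset V) : ℕ :=
  sInf {n | ∃ C : Finset V, IsVCOn G S C ∧ C.card = n}

/-- **Baker extension (core counting argument).** Let `G` have `n` vertices with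
`n ≤ 2 · opt`, where `opt = τ(G)`. Let `U 1, …, U k` cover `V(G)` with `∑ i |U i| ≤ c1 · n`,
and let `C i` be a minimum vertex cover of `G − U i`. Then each `U i ∪ C i` is a vertex
cover of `G` and some `i` satisfies `|U i ∪ C i| ≤ (1 + 2 c1 / k) · opt`. -/
theorem baker_extension {V : Type*} [Fintype V] [DecidableEq V] (G : SimpleGraph V)
    (hn : Fintype.card V ≤ 2 * vcOn G Finset.univ)
    (k : ℕ) (hk : 1 ≤ k) (c1 : ℚ) (hc1 : 0 < c1)
    (U : Fin k → Finset V) (hUcover : ∀ v : V, ∃ i : Fin k, v ∈ U i)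
    (hUsum : (∑ i : Fin k, ((U i).card : ℚ)) ≤ c1 * Fintype.card V)
    (C : Fin k → Finset V)
    (hCvc : ∀ i : Fin k, IsVCOn G (Finset.univ \ U i) (C i))
    (hCmin : ∀ i : Fin k, (C i).card = vcOn G (Finset.univ \ U i)) :
    (∀ i : Fin k, ∀ u v : V, G.Adj u v → u ∈ U i ∪ C i ∨ v ∈ U i ∪ C i) ∧
    ∃ i : Fin k, ((U i ∪ C i).card : ℚ) ≤ (1 + 2 * c1 / k) * vcOn G Finset.univ := by
  classical
  have hne : {n | ∃ C : Finset V, IsVCOn G Finset.univ C ∧ C.card = n}.Nonempty :=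
    ⟨Finset.univ.card, Finset.univ,
      ⟨subset_rfl, fun u _ _ _ _ => Or.inl (Finset.mem_univ u)⟩, rfl⟩
  obtain ⟨Copt, hCopt, hCoptcard⟩ := Nat.sInf_mem hne
  have cover : ∀ i : Fin k, ∀ u v : V, G.Adj u v → u ∈ U i ∪ C i ∨ v ∈ U i ∪ C i := by
    intro i u v huv
    by_cases hu : u ∈ U i
    · exact Or.inl (Finset.mem_union_left _ hu)
    by_cases hv : v ∈ U i
    · exact Or.inr (Finset.mem_union_left _ hv)
    rcases (hCvc i).2 u v huv (by simp [hu]) (by simp [hv]) with h | h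
    · exact Or.inl (Finset.mem_union_right _ h)
    · exact Or.inr (Finset.mem_union_right _ h)
  refine ⟨cover, ?_⟩
  have hCle : ∀ i : Fin k, (C i).card ≤ vcOn G Finset.univ := by
    intro i
    rw [hCmin i]
    calc vcOn G (Finset.univ \ U i) ≤ (Copt ∩ (Finset.univ \ U i)).card := by
          refine Nat.sInf_le ⟨Copt ∩ (Finset.univ \ U i),
            ⟨Finset.inter_subset_right, ?_⟩, rfl⟩
          intro u v huv hu hv
          rcases hCopt.2 u v huv (Finset.mem_univ u) (Finset.mem_univ v) with h | h
          · exact Or.inl (Finset.mem_inter.mpr ⟨h, hu⟩)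
          · exact Or.inr (Finset.mem_inter.mpr ⟨h, hv⟩)
      _ ≤ Copt.card := Finset.card_le_card Finset.inter_subset_left
      _ = vcOn G Finset.univ := hCoptcard
  have hkQ : (0:ℚ) < (k:ℚ) := by exact_mod_cast hk
  set opt : ℚ := (vcOn G Finset.univ : ℚ) with hopt
  have hoptn : (Fintype.card V : ℚ) ≤ 2 * opt := by rw [hopt]; exact_mod_cast hn
  have hsum : ∑ i : Fin k, ((U i ∪ C i).card : ℚ)
      ≤ ∑ _i : Fin k, (1 + 2 * c1 / k) * opt := by
    have h1 : ∑ i : Fin k, ((U i ∪ C i).card : ℚ)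
        ≤ (∑ i : Fin k, ((U i).card : ℚ)) + ∑ i : Fin k, ((C i).card : ℚ) := by
      rw [← Finset.sum_add_distrib]
      refine Finset.sum_le_sum fun i _ => ?_
      exact_mod_cast Finset.card_union_le (U i) (C i)
    have h2 : ∑ i : Fin k, ((C i).card : ℚ) ≤ (k : ℚ) * opt := by
      calc ∑ i : Fin k, ((C i).card : ℚ) ≤ ∑ _i : Fin k, opt :=
            Finset.sum_le_sum fun i _ => by rw [hopt]; exact_mod_cast hCle i
        _ = (k : ℚ) * opt := by simp [mul_comm]
    have h3 : ∑ _i : Fin k, (1 + 2 * c1 / k) * opt = (k : ℚ) * opt + 2 * c1 * opt := by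
      rw [Finset.sum_const]
      simp only [Finset.card_univ, Fintype.card_fin, nsmul_eq_mul]
      field_simp
    rw [h3]
    have h4 : (∑ i : Fin k, ((U i).card : ℚ)) ≤ 2 * c1 * opt := by
      calc (∑ i : Fin k, ((U i).card : ℚ)) ≤ c1 * Fintype.card V := hUsum
        _ ≤ c1 * (2 * opt) := by
            exact mul_le_mul_of_nonneg_left hoptn (le_of_lt hc1)
        _ = 2 * c1 * opt := by ring
    linarith
  haveI : Nonempty (Fin k) := ⟨⟨0, hk⟩⟩
  obtain ⟨i, _, hi⟩ := Finset.exists_le_of_sum_le Finset.univ_nonempty hsum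
  exact ⟨i, hi⟩
end

section
/- Let G be a finite simple graph with n vertices whose minimum vertex cover size opt satisfies n ≤ 2·opt, and let V(G) = V1 ⊎ V2 be a partition of its vertex set. Let ε ≥ 0, let optᵢ denote the minimum vertex cover size of the induced subgraph G[Vᵢ], and let Cᵢ be a vertex cover of G[Vᵢ] with |Cᵢ| ≤ (1 + ε)·optᵢ, for i = 1, 2. Then V1 ∪ C2 and V2 ∪ C1 are both vertex covers of G, and min(|V1 ∪ C2|, |V2 ∪ C1|) ≤ (1.5 + ε/2)·opt. -/
lemma vcOn_exists {V : Type*} (G : SimpleGraph V) (S : Finset V) :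
    ∃ C : Finset V, IsVCOn G S C ∧ C.card = vcOn G S := by
  have hne : {n | ∃ C : Finset V, IsVCOn G S C ∧ C.card = n}.Nonempty :=
    ⟨S.card, S, ⟨le_refl S, fun u v _ hu _ => Or.inl hu⟩, rfl⟩
  exact Nat.sInf_mem hne

lemma vcOn_le {V : Type*} (G : SimpleGraph V) (S C : Finset V) (h : IsVCOn G S C) :
    vcOn G S ≤ C.card :=
  Nat.sInf_le ⟨C, h, rfl⟩

/-- **Core of the (1.5 + ε)-approximation analysis.** If `n ≤ 2·opt`, the vertex set is
partitioned as `V1 ⊎ V2`, and `C i` is a `(1 + ε)`-approximate vertex cover of `G[V i]`,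
then `V1 ∪ C2` and `V2 ∪ C1` are vertex covers of `G` and the smaller of the two has size
at most `(1.5 + ε/2) · opt`. -/
theorem general_rectangles_core {V : Type*} [Fintype V] [DecidableEq V] (G : SimpleGraph V)
    (hn : Fintype.card V ≤ 2 * vcOn G Finset.univ)
    (V1 V2 : Finset V) (hdisj : Disjoint V1 V2) (hunion : V1 ∪ V2 = Finset.univ)
    (ε : ℝ) (hε : 0 ≤ ε) (C1 C2 : Finset V)
    (hC1 : IsVCOn G V1 C1) (hC2 : IsVCOn G V2 C2)
    (hC1card : (C1.card : ℝ) ≤ (1 + ε) * vcOn G V1)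
    (hC2card : (C2.card : ℝ) ≤ (1 + ε) * vcOn G V2) :
    (∀ u v : V, G.Adj u v → u ∈ V1 ∪ C2 ∨ v ∈ V1 ∪ C2) ∧
    (∀ u v : V, G.Adj u v → u ∈ V2 ∪ C1 ∨ v ∈ V2 ∪ C1) ∧
    min ((V1 ∪ C2).card : ℝ) ((V2 ∪ C1).card : ℝ)
      ≤ (1.5 + ε / 2) * vcOn G Finset.univ := by
  have hmem : ∀ x : V, x ∈ V1 ∨ x ∈ V2 := by
    intro x
    have : x ∈ V1 ∪ V2 := hunion ▸ Finset.mem_univ x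
    simpa [Finset.mem_union] using this
  refine ⟨?_, ?_, ?_⟩
  · intro u v huv
    rcases hmem u with hu | hu
    · exact Or.inl (Finset.mem_union_left _ hu)
    · rcases hmem v with hv | hv
      · exact Or.inr (Finset.mem_union_left _ hv)
      · rcases hC2.2 u v huv hu hv with h | h
        · exact Or.inl (Finset.mem_union_right _ h)
        · exact Or.inr (Finset.mem_union_right _ h)
  · intro u v huv
    rcases hmem u with hu | hu
    · rcases hmem v with hv | hv
      · rcases hC1.2 u v huv hu hv with h | h
        · exact Or.inl (Finset.mem_union_right _ h)
        · exact Or.inr (Finset.mem_union_right _ h)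
      · exact Or.inr (Finset.mem_union_left _ hv)
    · exact Or.inl (Finset.mem_union_left _ hu)
  · -- size bound
    obtain ⟨C, hC, hCcard⟩ := vcOn_exists G (Finset.univ : Finset V)
    -- opt1 + opt2 ≤ opt
    have h1 : vcOn G V1 ≤ (C ∩ V1).card := by
      apply vcOn_le
      refine ⟨Finset.inter_subset_right, fun u v huv hu hv => ?_⟩
      rcases hC.2 u v huv (Finset.mem_univ u) (Finset.mem_univ v) with h | h
      · exact Or.inl (Finset.mem_inter.mpr ⟨h, hu⟩)
      · exact Or.inr (Finset.mem_inter.mpr ⟨h, hv⟩)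
    have h2 : vcOn G V2 ≤ (C ∩ V2).card := by
      apply vcOn_le
      refine ⟨Finset.inter_subset_right, fun u v huv hu hv => ?_⟩
      rcases hC.2 u v huv (Finset.mem_univ u) (Finset.mem_univ v) with h | h
      · exact Or.inl (Finset.mem_inter.mpr ⟨h, hu⟩)
      · exact Or.inr (Finset.mem_inter.mpr ⟨h, hv⟩)
    have hsum : (C ∩ V1).card + (C ∩ V2).card ≤ C.card := by
      have hd : Disjoint (C ∩ V1) (C ∩ V2) :=
        hdisj.mono Finset.inter_subset_right Finset.inter_subset_right
      calc (C ∩ V1).card + (C ∩ V2).card = ((C ∩ V1) ∪ (C ∩ V2)).card :=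
            (Finset.card_union_of_disjoint hd).symm
        _ ≤ C.card := Finset.card_le_card (Finset.union_subset
            Finset.inter_subset_left Finset.inter_subset_left)
    have hopt : vcOn G V1 + vcOn G V2 ≤ vcOn G Finset.univ := by
      omega
    -- |V1| + |V2| = n
    have hV12 : V1.card + V2.card = Fintype.card V := by
      rw [← Finset.card_union_of_disjoint hdisj, hunion, Finset.card_univ]
    have hcard1 : ((V1 ∪ C2).card : ℝ) ≤ V1.card + C2.card := by
      exact_mod_cast Finset.card_union_le V1 C2
    have hcard2 : ((V2 ∪ C1).card : ℝ) ≤ V2.card + C1.card := by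
      exact_mod_cast Finset.card_union_le V2 C1
    have hoptR : (vcOn G V1 : ℝ) + vcOn G V2 ≤ vcOn G Finset.univ := by
      exact_mod_cast hopt
    have hnR : (V1.card : ℝ) + V2.card ≤ 2 * vcOn G Finset.univ := by
      have := hn
      rw [← hV12] at this
      exact_mod_cast this
    have hmul1 : (1 : ℝ) + ε ≥ 0 := by linarith
    have hsumC : (C1.card : ℝ) + C2.card ≤ (1 + ε) * vcOn G Finset.univ := by
      calc (C1.card : ℝ) + C2.card ≤ (1 + ε) * vcOn G V1 + (1 + ε) * vcOn G V2 := by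
            linarith
        _ = (1 + ε) * ((vcOn G V1 : ℝ) + vcOn G V2) := by ring
        _ ≤ (1 + ε) * vcOn G Finset.univ := by
            exact mul_le_mul_of_nonneg_left hoptR hmul1
    rcases le_total ((V1 ∪ C2).card : ℝ) ((V2 ∪ C1).card : ℝ) with h | h
    · rw [min_eq_left h]; linarith
    · rw [min_eq_right h]; linarith
end

section
/- Let R1 and R2 be two axis-parallel rectangles in general position such that R1 ∩ R2 ≠ ∅, R1 ⊄ R2, R2 ⊄ R1, and at least one corner of one of the rectangles lies in the other rectangle (a corner intersection). Then the intersection of the topological boundaries of R1 and R2 consists of exactly two points. -/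
open Set

lemma frontier_toSet (R : AxisRect) :
    frontier R.toSet =
      (R.X ×ˢ ({R.c, R.d} : Set ℝ)) ∪ (({R.a, R.b} : Set ℝ) ×ˢ R.Y) := by
  show frontier (R.X ×ˢ R.Y) = _
  rw [frontier_prod_eq]
  unfold AxisRect.X AxisRect.Y
  rw [closure_Icc, closure_Icc, frontier_Icc R.hab.le, frontier_Icc R.hcd.le]

lemma pair_disj {u v s t : ℝ} (h1 : u ≠ s) (h2 : u ≠ t) (h3 : v ≠ s) (h4 : v ≠ t) :
    ({u, v} : Set ℝ) ∩ ({s, t} : Set ℝ) = ∅ := by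
  ext x
  simp only [mem_inter_iff, mem_insert_iff, mem_singleton_iff, mem_empty_iff_false, iff_false]
  rintro ⟨rfl | rfl, rfl | rfl⟩ <;> simp_all

lemma key_lemma (R S : AxisRect)
    (hx : ({R.a, R.b} : Set ℝ) ∩ ({S.a, S.b} : Set ℝ) = ∅)
    (hy : ({R.c, R.d} : Set ℝ) ∩ ({S.c, S.d} : Set ℝ) = ∅) :
    frontier R.toSet ∩ frontier S.toSet =
      ((R.X ∩ ({S.a, S.b} : Set ℝ)) ×ˢ (({R.c, R.d} : Set ℝ) ∩ S.Y)) ∪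
      ((({R.a, R.b} : Set ℝ) ∩ S.X) ×ˢ (R.Y ∩ ({S.c, S.d} : Set ℝ))) := by
  rw [frontier_toSet, frontier_toSet, Set.union_inter_distrib_right,
    Set.inter_union_distrib_left, Set.inter_union_distrib_left,
    Set.prod_inter_prod, Set.prod_inter_prod, Set.prod_inter_prod, Set.prod_inter_prod,
    hy, hx, Set.prod_empty, Set.empty_prod, Set.empty_union, Set.union_empty]

lemma Icc_inter_pair_both {l r u v : ℝ} (hu : u ∈ Set.Icc l r) (hv : v ∈ Set.Icc l r) :
    Set.Icc l r ∩ ({u, v} : Set ℝ) = {u, v} := by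
  apply Set.inter_eq_right.mpr
  rintro x (rfl | rfl) <;> assumption

lemma Icc_inter_pair_left {l r u v : ℝ} (hu : u ∈ Set.Icc l r) (hv : v ∉ Set.Icc l r) :
    Set.Icc l r ∩ ({u, v} : Set ℝ) = {u} := by
  ext x
  simp only [mem_inter_iff, mem_insert_iff, mem_singleton_iff]
  constructor
  · rintro ⟨h, rfl | rfl⟩
    · rfl
    · exact absurd h hv
  · rintro rfl; exact ⟨hu, Or.inl rfl⟩

lemma Icc_inter_pair_right {l r u v : ℝ} (hu : u ∉ Set.Icc l r) (hv : v ∈ Set.Icc l r) :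
    Set.Icc l r ∩ ({u, v} : Set ℝ) = {v} := by
  ext x
  simp only [mem_inter_iff, mem_insert_iff, mem_singleton_iff]
  constructor
  · rintro ⟨h, rfl | rfl⟩
    · exact absurd h hu
    · rfl
  · rintro rfl; exact ⟨hv, Or.inr rfl⟩

lemma Icc_inter_pair_none {l r u v : ℝ} (hu : u ∉ Set.Icc l r) (hv : v ∉ Set.Icc l r) :
    Set.Icc l r ∩ ({u, v} : Set ℝ) = ∅ := by
  ext x
  simp only [mem_inter_iff, mem_insert_iff, mem_singleton_iff, mem_empty_iff_false, iff_false]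
  rintro ⟨h, rfl | rfl⟩
  exacts [hu h, hv h]

lemma pair_inter_Icc_both {l r u v : ℝ} (hu : u ∈ Set.Icc l r) (hv : v ∈ Set.Icc l r) :
    ({u, v} : Set ℝ) ∩ Set.Icc l r = {u, v} := by
  rw [Set.inter_comm]; exact Icc_inter_pair_both hu hv

lemma pair_inter_Icc_left {l r u v : ℝ} (hu : u ∈ Set.Icc l r) (hv : v ∉ Set.Icc l r) :
    ({u, v} : Set ℝ) ∩ Set.Icc l r = {u} := by
  rw [Set.inter_comm]; exact Icc_inter_pair_left hu hv

lemma pair_inter_Icc_right {l r u v : ℝ} (hu : u ∉ Set.Icc l r) (hv : v ∈ Set.Icc l r) :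
    ({u, v} : Set ℝ) ∩ Set.Icc l r = {v} := by
  rw [Set.inter_comm]; exact Icc_inter_pair_right hu hv

lemma pair_inter_Icc_none {l r u v : ℝ} (hu : u ∉ Set.Icc l r) (hv : v ∉ Set.Icc l r) :
    ({u, v} : Set ℝ) ∩ Set.Icc l r = ∅ := by
  rw [Set.inter_comm]; exact Icc_inter_pair_none hu hv

lemma prod11 {x y : ℝ} : ({x} : Set ℝ) ×ˢ ({y} : Set ℝ) = {(x, y)} :=
  Set.singleton_prod_singleton

lemma prod12 {x y y' : ℝ} : ({x} : Set ℝ) ×ˢ ({y, y'} : Set ℝ) = {(x, y), (x, y')} := by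
  ext ⟨a, b⟩
  simp only [Set.mem_prod, mem_singleton_iff, mem_insert_iff, Prod.mk.injEq]
  tauto

lemma prod21 {x x' y : ℝ} : ({x, x'} : Set ℝ) ×ˢ ({y} : Set ℝ) = {(x, y), (x', y)} := by
  ext ⟨a, b⟩
  simp only [Set.mem_prod, mem_singleton_iff, mem_insert_iff, Prod.mk.injEq]
  tauto

lemma ncard_two_of_fst {p q : ℝ × ℝ} (h : p.1 ≠ q.1) : ({p, q} : Set (ℝ × ℝ)).ncard = 2 :=
  Set.ncard_pair (fun hpq => h (by rw [hpq]))

lemma ncard_two_of_snd {p q : ℝ × ℝ} (h : p.2 ≠ q.2) : ({p, q} : Set (ℝ × ℝ)).ncard = 2 :=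
  Set.ncard_pair (fun hpq => h (by rw [hpq]))

/-- **Corner intersection.** If two rectangles in general position intersect, neither
contains the other, and a corner of one lies in the other, then their topological
boundaries intersect in exactly two points. -/
theorem corner_intersection_two_joints (R1 R2 : AxisRect) (hgp : GenPosPair R1 R2)
    (hint : (R1.toSet ∩ R2.toSet).Nonempty)
    (hns1 : ¬ R1.toSet ⊆ R2.toSet) (hns2 : ¬ R2.toSet ⊆ R1.toSet)
    (hcorner : (∃ p ∈ R1.corners, p ∈ R2.toSet) ∨ (∃ p ∈ R2.corners, p ∈ R1.toSet)) :
    (frontier R1.toSet ∩ frontier R2.toSet).ncard = 2 := by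
  obtain ⟨haa, hab, hba, hbb, hcc, hcd, hdc, hdd⟩ := hgp
  obtain ⟨⟨x, y⟩, ⟨⟨hx1, hy1⟩, hx2, hy2⟩⟩ := hint
  simp only [AxisRect.X, AxisRect.Y, Set.mem_Icc] at hx1 hy1 hx2 hy2
  have h1ab := R1.hab; have h1cd := R1.hcd; have h2ab := R2.hab; have h2cd := R2.hcd
  -- overlap inequalities
  have hab2 : R1.a < R2.b := lt_of_le_of_ne (by linarith [hx1.1, hx2.2]) hab
  have hba2 : R2.a < R1.b := Ne.lt_of_le (Ne.symm hba) (by linarith [hx1.2, hx2.1])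
  have hcd2 : R1.c < R2.d := lt_of_le_of_ne (by linarith [hy1.1, hy2.2]) hcd
  have hdc2 : R2.c < R1.d := Ne.lt_of_le (Ne.symm hdc) (by linarith [hy1.2, hy2.1])
  rw [key_lemma R1 R2 (pair_disj haa hab hba hbb) (pair_disj hcc hcd hdc hdd)]
  unfold AxisRect.X AxisRect.Y
  -- notation for memberships
  rcases lt_or_gt_of_ne haa with hA | hA <;> rcases lt_or_gt_of_ne hbb with hB | hB <;>
    rcases lt_or_gt_of_ne hcc with hC | hC <;> rcases lt_or_gt_of_ne hdd with hD | hD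
  -- X=L, Y=L
  · rw [Icc_inter_pair_left ⟨hA.le, hba2.le⟩ (fun h => absurd h.2 (not_le.mpr hB)),
      pair_inter_Icc_right (fun h => absurd h.1 (not_le.mpr hC)) ⟨hdc2.le, hD.le⟩,
      pair_inter_Icc_right (fun h => absurd h.1 (not_le.mpr hA)) ⟨hba2.le, hB.le⟩,
      Icc_inter_pair_left ⟨hC.le, hdc2.le⟩ (fun h => absurd h.2 (not_le.mpr hD)),
      prod11, prod11, Set.singleton_union]
    exact ncard_two_of_fst (by exact ne_of_lt hba2)
  -- X=L, Y=in21
  · rw [Icc_inter_pair_left ⟨hA.le, hba2.le⟩ (fun h => absurd h.2 (not_le.mpr hB)),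
      pair_inter_Icc_none (fun h => absurd h.1 (not_le.mpr hC)) (fun h => absurd h.2 (not_le.mpr hD)),
      pair_inter_Icc_right (fun h => absurd h.1 (not_le.mpr hA)) ⟨hba2.le, hB.le⟩,
      Icc_inter_pair_both ⟨hC.le, hdc2.le⟩ ⟨hcd2.le, hD.le⟩,
      Set.prod_empty, Set.empty_union, prod12]
    exact ncard_two_of_snd (by exact ne_of_lt h2cd)
  -- X=L, Y=in12
  · rw [Icc_inter_pair_left ⟨hA.le, hba2.le⟩ (fun h => absurd h.2 (not_le.mpr hB)),
      pair_inter_Icc_both ⟨hC.le, hcd2.le⟩ ⟨hdc2.le, hD.le⟩,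
      pair_inter_Icc_right (fun h => absurd h.1 (not_le.mpr hA)) ⟨hba2.le, hB.le⟩,
      Icc_inter_pair_none (fun h => absurd h.1 (not_le.mpr hC)) (fun h => absurd h.2 (not_le.mpr hD)),
      Set.prod_empty, Set.union_empty, prod12]
    exact ncard_two_of_snd (by exact ne_of_lt h1cd)
  -- X=L, Y=R
  · rw [Icc_inter_pair_left ⟨hA.le, hba2.le⟩ (fun h => absurd h.2 (not_le.mpr hB)),
      pair_inter_Icc_left ⟨hC.le, hcd2.le⟩ (fun h => absurd h.2 (not_le.mpr hD)),
      pair_inter_Icc_right (fun h => absurd h.1 (not_le.mpr hA)) ⟨hba2.le, hB.le⟩,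
      Icc_inter_pair_right (fun h => absurd h.1 (not_le.mpr hC)) ⟨hcd2.le, hD.le⟩,
      prod11, prod11, Set.singleton_union]
    exact ncard_two_of_fst (by exact ne_of_lt hba2)
  -- X=in21, Y=L
  · rw [Icc_inter_pair_both ⟨hA.le, hba2.le⟩ ⟨hab2.le, hB.le⟩,
      pair_inter_Icc_right (fun h => absurd h.1 (not_le.mpr hC)) ⟨hdc2.le, hD.le⟩,
      pair_inter_Icc_none (fun h => absurd h.1 (not_le.mpr hA)) (fun h => absurd h.2 (not_le.mpr hB)),
      Icc_inter_pair_left ⟨hC.le, hdc2.le⟩ (fun h => absurd h.2 (not_le.mpr hD)),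
      Set.empty_prod, Set.union_empty, prod21]
    exact ncard_two_of_fst (by exact ne_of_lt h2ab)
  -- X=in21, Y=in21
  · exact absurd (Set.prod_mono (Set.Icc_subset_Icc hA.le hB.le)
      (Set.Icc_subset_Icc hC.le hD.le)) hns2
  -- X=in21, Y=in12
  · exfalso
    rcases hcorner with ⟨p, ⟨hpx, hpy⟩, ⟨hqx, hqy⟩⟩ | ⟨p, ⟨hpx, hpy⟩, ⟨hqx, hqy⟩⟩ <;>
      simp only [AxisRect.X, AxisRect.Y, AxisRect.toSet, AxisRect.corners, Set.mem_prod,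
        Set.mem_Icc, mem_insert_iff, mem_singleton_iff] at hpx hpy hqx hqy
    · rcases hpx with h | h <;> rw [h] at hqx <;> linarith [hqx.1, hqx.2]
    · rcases hpy with h | h <;> rw [h] at hqy <;> linarith [hqy.1, hqy.2]
  -- X=in21, Y=R
  · rw [Icc_inter_pair_both ⟨hA.le, hba2.le⟩ ⟨hab2.le, hB.le⟩,
      pair_inter_Icc_left ⟨hC.le, hcd2.le⟩ (fun h => absurd h.2 (not_le.mpr hD)),
      pair_inter_Icc_none (fun h => absurd h.1 (not_le.mpr hA)) (fun h => absurd h.2 (not_le.mpr hB)),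
      Icc_inter_pair_right (fun h => absurd h.1 (not_le.mpr hC)) ⟨hcd2.le, hD.le⟩,
      Set.empty_prod, Set.union_empty, prod21]
    exact ncard_two_of_fst (by exact ne_of_lt h2ab)
  -- X=in12, Y=L
  · rw [Icc_inter_pair_none (fun h => absurd h.1 (not_le.mpr hA)) (fun h => absurd h.2 (not_le.mpr hB)),
      pair_inter_Icc_right (fun h => absurd h.1 (not_le.mpr hC)) ⟨hdc2.le, hD.le⟩,
      pair_inter_Icc_both ⟨hA.le, hab2.le⟩ ⟨hba2.le, hB.le⟩,
      Icc_inter_pair_left ⟨hC.le, hdc2.le⟩ (fun h => absurd h.2 (not_le.mpr hD)),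
      Set.empty_prod, Set.empty_union, prod21]
    exact ncard_two_of_fst (by exact ne_of_lt h1ab)
  -- X=in12, Y=in21
  · exfalso
    rcases hcorner with ⟨p, ⟨hpx, hpy⟩, ⟨hqx, hqy⟩⟩ | ⟨p, ⟨hpx, hpy⟩, ⟨hqx, hqy⟩⟩ <;>
      simp only [AxisRect.X, AxisRect.Y, AxisRect.toSet, AxisRect.corners, Set.mem_prod,
        Set.mem_Icc, mem_insert_iff, mem_singleton_iff] at hpx hpy hqx hqy
    · rcases hpy with h | h <;> rw [h] at hqy <;> linarith [hqy.1, hqy.2]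
    · rcases hpx with h | h <;> rw [h] at hqx <;> linarith [hqx.1, hqx.2]
  -- X=in12, Y=in12
  · exact absurd (Set.prod_mono (Set.Icc_subset_Icc hA.le hB.le)
      (Set.Icc_subset_Icc hC.le hD.le)) hns1
  -- X=in12, Y=R
  · rw [Icc_inter_pair_none (fun h => absurd h.1 (not_le.mpr hA)) (fun h => absurd h.2 (not_le.mpr hB)),
      pair_inter_Icc_left ⟨hC.le, hcd2.le⟩ (fun h => absurd h.2 (not_le.mpr hD)),
      pair_inter_Icc_both ⟨hA.le, hab2.le⟩ ⟨hba2.le, hB.le⟩,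
      Icc_inter_pair_right (fun h => absurd h.1 (not_le.mpr hC)) ⟨hcd2.le, hD.le⟩,
      Set.empty_prod, Set.empty_union, prod21]
    exact ncard_two_of_fst (by exact ne_of_lt h1ab)
  -- X=R, Y=L
  · rw [Icc_inter_pair_right (fun h => absurd h.1 (not_le.mpr hA)) ⟨hab2.le, hB.le⟩,
      pair_inter_Icc_right (fun h => absurd h.1 (not_le.mpr hC)) ⟨hdc2.le, hD.le⟩,
      pair_inter_Icc_left ⟨hA.le, hab2.le⟩ (fun h => absurd h.2 (not_le.mpr hB)),
      Icc_inter_pair_left ⟨hC.le, hdc2.le⟩ (fun h => absurd h.2 (not_le.mpr hD)),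
      prod11, prod11, Set.singleton_union]
    exact ncard_two_of_fst (by exact ne_of_gt hab2)
  -- X=R, Y=in21
  · rw [Icc_inter_pair_right (fun h => absurd h.1 (not_le.mpr hA)) ⟨hab2.le, hB.le⟩,
      pair_inter_Icc_none (fun h => absurd h.1 (not_le.mpr hC)) (fun h => absurd h.2 (not_le.mpr hD)),
      pair_inter_Icc_left ⟨hA.le, hab2.le⟩ (fun h => absurd h.2 (not_le.mpr hB)),
      Icc_inter_pair_both ⟨hC.le, hdc2.le⟩ ⟨hcd2.le, hD.le⟩,
      Set.prod_empty, Set.empty_union, prod12]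
    exact ncard_two_of_snd (by exact ne_of_lt h2cd)
  -- X=R, Y=in12
  · rw [Icc_inter_pair_right (fun h => absurd h.1 (not_le.mpr hA)) ⟨hab2.le, hB.le⟩,
      pair_inter_Icc_both ⟨hC.le, hcd2.le⟩ ⟨hdc2.le, hD.le⟩,
      pair_inter_Icc_left ⟨hA.le, hab2.le⟩ (fun h => absurd h.2 (not_le.mpr hB)),
      Icc_inter_pair_none (fun h => absurd h.1 (not_le.mpr hC)) (fun h => absurd h.2 (not_le.mpr hD)),
      Set.prod_empty, Set.union_empty, prod12]
    exact ncard_two_of_snd (by exact ne_of_lt h1cd)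
  -- X=R, Y=R
  · rw [Icc_inter_pair_right (fun h => absurd h.1 (not_le.mpr hA)) ⟨hab2.le, hB.le⟩,
      pair_inter_Icc_left ⟨hC.le, hcd2.le⟩ (fun h => absurd h.2 (not_le.mpr hD)),
      pair_inter_Icc_left ⟨hA.le, hab2.le⟩ (fun h => absurd h.2 (not_le.mpr hB)),
      Icc_inter_pair_right (fun h => absurd h.1 (not_le.mpr hC)) ⟨hcd2.le, hD.le⟩,
      prod11, prod11, Set.singleton_union]
    exact ncard_two_of_fst (by exact ne_of_gt hab2)
end

section
/- Let q ≥ 1 be an integer and let F be a finite set of n axis-parallel rectangles in general position such that no two rectangles of F cross and no q + 1 rectangles of F pairwise intersect. Then the number of unordered pairs of distinct intersecting rectangles of F is at most 4(q − 1)·n. -/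
def cornerPt (R : AxisRect) : Fin 4 → ℝ × ℝ :=
  ![(R.a, R.c), (R.a, R.d), (R.b, R.c), (R.b, R.d)]

lemma cornerPt_self_mem (R : AxisRect) (k : Fin 4) : cornerPt R k ∈ R.toSet := by
  have h1 := R.hab.le
  have h2 := R.hcd.le
  fin_cases k <;>
    simp [cornerPt, AxisRect.toSet, AxisRect.X, AxisRect.Y, Set.mem_prod, h1, h2]

lemma interval_tri (a1 b1 a2 b2 t : ℝ) (h1 : a1 < b1) (h2 : a2 < b2)
    (hne1 : a1 ≠ a2) (hne4 : b1 ≠ b2)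
    (ht1 : a1 ≤ t) (ht2 : t ≤ b1) (ht3 : a2 ≤ t) (ht4 : t ≤ b2) :
    (a2 < a1 ∧ b1 < b2) ∨ (a1 < a2 ∧ b2 < b1) ∨
      (((a2 ≤ a1 ∧ a1 ≤ b2) ∨ (a2 ≤ b1 ∧ b1 ≤ b2)) ∧
       ((a1 ≤ a2 ∧ a2 ≤ b1) ∨ (a1 ≤ b2 ∧ b2 ≤ b1))) := by
  rcases lt_or_gt_of_ne hne1 with h | h <;> rcases lt_or_gt_of_ne hne4 with h' | h'
  · right; right
    exact ⟨Or.inr ⟨by linarith, h'.le⟩, Or.inl ⟨h.le, by linarith⟩⟩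
  · right; left; exact ⟨h, h'⟩
  · left; exact ⟨h, h'⟩
  · right; right
    exact ⟨Or.inl ⟨h.le, by linarith⟩, Or.inr ⟨by linarith, h'.le⟩⟩

lemma corner_of_E (R S : AxisRect)
    (hx : (S.a ≤ R.a ∧ R.a ≤ S.b) ∨ (S.a ≤ R.b ∧ R.b ≤ S.b))
    (hy : (S.c ≤ R.c ∧ R.c ≤ S.d) ∨ (S.c ≤ R.d ∧ R.d ≤ S.d)) :
    ∃ k, cornerPt R k ∈ S.toSet := by
  rcases hx with hx | hx <;> rcases hy with hy | hy
  · exact ⟨0, by simp [cornerPt, AxisRect.toSet, AxisRect.X, AxisRect.Y]; tauto⟩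
  · exact ⟨1, by simp [cornerPt, AxisRect.toSet, AxisRect.X, AxisRect.Y]; tauto⟩
  · exact ⟨2, by simp [cornerPt, AxisRect.toSet, AxisRect.X, AxisRect.Y]; tauto⟩
  · exact ⟨3, by simp [cornerPt, AxisRect.toSet, AxisRect.X, AxisRect.Y]; tauto⟩

lemma Icc_ssub (a1 b1 a2 b2 : ℝ) (h1 : a1 < b1) (ha : a2 < a1) (hb : b1 < b2) :
    Set.Icc a1 b1 ⊂ Set.Icc a2 b2 := by
  rw [Set.ssubset_def]
  refine ⟨Set.Icc_subset_Icc ha.le hb.le, fun h => ?_⟩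
  have := h (Set.left_mem_Icc.mpr (by linarith))
  simp [Set.mem_Icc] at this
  linarith

lemma corner_exists (R S : AxisRect) (hgp : GenPosPair R S)
    (hnc : ¬ AxisRect.Cross R S) (hint : (R.toSet ∩ S.toSet).Nonempty) :
    (∃ k, cornerPt R k ∈ S.toSet) ∨ (∃ k, cornerPt S k ∈ R.toSet) := by
  obtain ⟨⟨x, y⟩, hR, hS⟩ := hint
  simp only [AxisRect.toSet, AxisRect.X, AxisRect.Y, Set.mem_prod, Set.mem_Icc] at hR hS
  obtain ⟨hga, hgb, hgc, hgd, hge, hgf, hgg, hgh⟩ := hgp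
  have hx := interval_tri R.a R.b S.a S.b x R.hab S.hab hga hgd hR.1.1 hR.1.2 hS.1.1 hS.1.2
  have hy := interval_tri R.c R.d S.c S.d y R.hcd S.hcd hge hgh hR.2.1 hR.2.2 hS.2.1 hS.2.2
  rcases hx with hx | hx | hx <;> rcases hy with hy | hy | hy
  · exact Or.inl (corner_of_E R S (Or.inl ⟨hx.1.le, by linarith [R.hab]⟩)
      (Or.inl ⟨hy.1.le, by linarith [R.hcd]⟩))
  · exact absurd (Or.inl ⟨Icc_ssub _ _ _ _ R.hab hx.1 hx.2, Icc_ssub _ _ _ _ S.hcd hy.1 hy.2⟩) hnc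
  · exact Or.inl (corner_of_E R S (Or.inl ⟨hx.1.le, by linarith [R.hab]⟩) hy.1)
  · exact absurd (Or.inr ⟨Icc_ssub _ _ _ _ S.hab hx.1 hx.2, Icc_ssub _ _ _ _ R.hcd hy.1 hy.2⟩) hnc
  · exact Or.inr (corner_of_E S R (Or.inl ⟨hx.1.le, by linarith [S.hab]⟩)
      (Or.inl ⟨hy.1.le, by linarith [S.hcd]⟩))
  · exact Or.inr (corner_of_E S R (Or.inl ⟨hx.1.le, by linarith [S.hab]⟩) hy.2)
  · exact Or.inl (corner_of_E R S hx.1 (Or.inl ⟨hy.1.le, by linarith [R.hcd]⟩))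
  · exact Or.inr (corner_of_E S R hx.2 (Or.inl ⟨hy.1.le, by linarith [S.hcd]⟩))
  · exact Or.inl (corner_of_E R S hx.1 hy.1)

/-- **Edge count of non-crossing bounded-clique families.** If no two rectangles of a
family of `n` rectangles in general position cross and no `q + 1` of them pairwise
intersect, then the number of unordered pairs of distinct intersecting rectangles is at
most `4 (q - 1) n`. -/
theorem intersecting_pair_count (q n : ℕ) (hq : 1 ≤ q) (R : Fin n → AxisRect)
    (hgp : ∀ i j : Fin n, i ≠ j → GenPosPair (R i) (R j))
    (hnc : ∀ i j : Fin n, ¬ AxisRect.Cross (R i) (R j))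
    (hclique : ∀ S : Finset (Fin n),
      (∀ i ∈ S, ∀ j ∈ S, ((R i).toSet ∩ (R j).toSet).Nonempty) → S.card ≤ q) :
    ({p : Fin n × Fin n |
        p.1 < p.2 ∧ ((R p.1).toSet ∩ (R p.2).toSet).Nonempty}).ncard
      ≤ 4 * (q - 1) * n := by
  classical
  set P : Fin n × Fin n → Prop :=
    fun p => p.1 < p.2 ∧ ((R p.1).toSet ∩ (R p.2).toSet).Nonempty with hP
  set T : Finset (Fin n × Fin n) := Finset.univ.filter P with hT
  have hset : {p : Fin n × Fin n |
      p.1 < p.2 ∧ ((R p.1).toSet ∩ (R p.2).toSet).Nonempty} = ↑T := by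
    ext p; simp [hT, hP]
  rw [hset, Set.ncard_coe_finset]
  -- choice of owner and corner index
  have key : ∀ p : Fin n × Fin n, P p → ∃ ok : Fin n × Fin 4,
      (ok.1 = p.1 ∧ cornerPt (R p.1) ok.2 ∈ (R p.2).toSet) ∨
      (ok.1 = p.2 ∧ cornerPt (R p.2) ok.2 ∈ (R p.1).toSet) := by
    intro p hp
    have hne : p.1 ≠ p.2 := ne_of_lt hp.1
    rcases corner_exists (R p.1) (R p.2) (hgp _ _ hne) (hnc _ _) hp.2 with ⟨k, hk⟩ | ⟨k, hk⟩
    · exact ⟨(p.1, k), Or.inl ⟨rfl, hk⟩⟩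
    · exact ⟨(p.2, k), Or.inr ⟨rfl, hk⟩⟩
  set f : Fin n × Fin n → Fin n × Fin 4 :=
    fun p => if h : P p then (key p h).choose else (p.1, 0) with hf
  have fspec : ∀ p, P p →
      ((f p).1 = p.1 ∧ cornerPt (R p.1) (f p).2 ∈ (R p.2).toSet) ∨
      ((f p).1 = p.2 ∧ cornerPt (R p.2) (f p).2 ∈ (R p.1).toSet) := by
    intro p hp
    simp only [hf, dif_pos hp]
    exact (key p hp).choose_spec
  have hmain : T.card ≤ (q - 1) * (Finset.univ : Finset (Fin n × Fin 4)).card := by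
    apply Finset.card_le_mul_card_image_of_maps_to (fun a _ => Finset.mem_univ (f a))
    rintro ⟨i, c⟩ -
    -- fiber injects into the rectangles containing the corner point
    set J : Finset (Fin n) :=
      Finset.univ.filter (fun j => j ≠ i ∧ cornerPt (R i) c ∈ (R j).toSet) with hJ
    have hfiber : (T.filter fun p => f p = (i, c)).card ≤ J.card := by
      apply Finset.card_le_card_of_injOn (fun p => if p.1 = i then p.2 else p.1)
      · intro p hp
        simp only [Finset.mem_coe, Finset.mem_filter, hT] at hp
        obtain ⟨⟨-, hPp⟩, hfp⟩ := hp
        rcases fspec p hPp with ⟨ho, hk⟩ | ⟨ho, hk⟩ <;> rw [hfp] at ho hk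
        · have h1 : p.1 = i := ho.symm
          have h2 : p.2 ≠ i := fun h => absurd (h1.trans h.symm) (ne_of_lt hPp.1)
          simp only [hJ, Finset.mem_coe, Finset.mem_filter, Finset.mem_univ, true_and, if_pos h1]
          exact ⟨h2, by rw [← h1]; exact hk⟩
        · have h2 : p.2 = i := ho.symm
          have h1 : p.1 ≠ i := fun h => absurd (h.trans h2.symm) (ne_of_lt hPp.1)
          simp only [hJ, Finset.mem_coe, Finset.mem_filter, Finset.mem_univ, true_and, if_neg h1]
          exact ⟨h1, by rw [← h2]; exact hk⟩
      · intro p hp p' hp' heq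
        simp only [Finset.mem_coe, Finset.mem_filter, hT] at hp hp'
        obtain ⟨⟨-, hPp⟩, hfp⟩ := hp
        obtain ⟨⟨-, hPp'⟩, hfp'⟩ := hp'
        have hop : p.1 = i ∨ p.2 = i := by
          rcases fspec p hPp with ⟨ho, -⟩ | ⟨ho, -⟩ <;> rw [hfp] at ho <;>
            [exact Or.inl ho.symm; exact Or.inr ho.symm]
        have hop' : p'.1 = i ∨ p'.2 = i := by
          rcases fspec p' hPp' with ⟨ho, -⟩ | ⟨ho, -⟩ <;> rw [hfp'] at ho <;>
            [exact Or.inl ho.symm; exact Or.inr ho.symm]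
        have hlt := hPp.1; have hlt' := hPp'.1
        by_cases hc1 : p.1 = i <;> by_cases hc2 : p'.1 = i <;>
          simp only [hc1, hc2, if_pos, if_neg, if_true, ite_true, ite_false] at heq
        · exact Prod.ext (hc1.trans hc2.symm) heq
        · exfalso
          have h2' : p'.2 = i := hop'.resolve_left hc2
          rw [hc1] at hlt; rw [h2'] at hlt'; rw [heq] at hlt
          exact absurd hlt (lt_asymm hlt')
        · exfalso
          have h2 : p.2 = i := hop.resolve_left hc1
          rw [hc2] at hlt'; rw [h2] at hlt; rw [← heq] at hlt'
          exact absurd hlt (lt_asymm hlt')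
        · have h2 : p.2 = i := hop.resolve_left hc1
          have h2' : p'.2 = i := hop'.resolve_left hc2
          exact Prod.ext heq (h2.trans h2'.symm)
    have hJcard : J.card ≤ q - 1 := by
      have hiJ : i ∉ J := by simp [hJ]
      have hclq : (insert i J).card ≤ q := by
        apply hclique
        intro a ha b hb
        have hmem : ∀ x ∈ insert i J, cornerPt (R i) c ∈ (R x).toSet := by
          intro x hx
          rcases Finset.mem_insert.mp hx with rfl | hx
          · exact cornerPt_self_mem (R x) c
          · exact ((Finset.mem_filter.mp hx).2).2
        exact ⟨cornerPt (R i) c, hmem a ha, hmem b hb⟩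
      rw [Finset.card_insert_of_notMem hiJ] at hclq
      omega
    exact hfiber.trans hJcard
  have hcard : (Finset.univ : Finset (Fin n × Fin 4)).card = n * 4 := by
    simp [Fintype.card_prod]
  rw [hcard] at hmain
  calc T.card ≤ (q - 1) * (n * 4) := hmain
    _ = 4 * (q - 1) * n := by ring
end

section
/- Let q ≥ 1 be an integer and let F be a finite set of n axis-parallel rectangles in general position such that no two rectangles of F cross and no q + 1 rectangles of F pairwise intersect. Then the set of joints of F, i.e. the set of points p ∈ ℝ² that lie on the topological boundaries of at least two distinct rectangles of F, has cardinality at most 8(q − 1)·n. -/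
namespace JointAux

def sel (e : Bool) (x y : ℝ) : ℝ := if e then y else x
@[simp] lemma sel_false (x y : ℝ) : sel false x y = x := rfl
@[simp] lemma sel_true (x y : ℝ) : sel true x y = y := rfl

lemma mem_frontier_axisRect (S : AxisRect) (p : ℝ × ℝ) :
    p ∈ frontier S.toSet ↔
      ((p.1 = S.a ∨ p.1 = S.b) ∧ p.2 ∈ Set.Icc S.c S.d) ∨
      (p.1 ∈ Set.Icc S.a S.b ∧ (p.2 = S.c ∨ p.2 = S.d)) := by
  rw [AxisRect.toSet, AxisRect.X, AxisRect.Y, frontier_prod_eq,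
    frontier_Icc S.hab.le, frontier_Icc S.hcd.le, closure_Icc, closure_Icc]
  constructor
  · rintro (⟨h1, h2⟩ | ⟨h1, h2⟩)
    · exact Or.inr ⟨h1, by simpa using h2⟩
    · exact Or.inl ⟨by simpa using h1, h2⟩
  · rintro (⟨h1, h2⟩ | ⟨h1, h2⟩)
    · exact Or.inr ⟨by simpa using h1, h2⟩
    · exact Or.inl ⟨h1, by simpa using h2⟩

lemma corner_mem_self (S : AxisRect) (e d : Bool) :
    (sel e S.a S.b, sel d S.c S.d) ∈ S.toSet := by
  constructor <;> [skip; skip] <;>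
    cases e <;> cases d <;>
    simp [AxisRect.X, AxisRect.Y, S.hab.le, S.hcd.le]

def PA (p : ℝ × ℝ) (e d' : Bool) (A B : AxisRect) : Prop :=
  p.1 = sel e A.a A.b ∧ p.2 ∈ Set.Ioo A.c A.d ∧ (p.2 = B.c ∨ p.2 = B.d) ∧
  sel d' A.c A.d ∈ Set.Icc B.c B.d ∧ p.1 ∈ Set.Icc B.a B.b

def PB (p : ℝ × ℝ) (e' d : Bool) (A B : AxisRect) : Prop :=
  p.2 = sel d A.c A.d ∧ p.1 ∈ Set.Ioo A.a A.b ∧ (p.1 = B.a ∨ p.1 = B.b) ∧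
  sel e' A.a A.b ∈ Set.Icc B.a B.b ∧ p.2 ∈ Set.Icc B.c B.d

lemma PA_inj {p p' : ℝ × ℝ} {e d' : Bool} {A B : AxisRect}
    (h : PA p e d' A B) (h' : PA p' e d' A B) : p = p' := by
  obtain ⟨h1, h2, h3, h4, h5⟩ := h
  obtain ⟨h1', h2', h3', h4', h5'⟩ := h'
  have hx : p.1 = p'.1 := h1.trans h1'.symm
  by_cases hy : p.2 = p'.2
  · exact Prod.ext hx hy
  exfalso
  have hcd : B.c ∈ Set.Ioo A.c A.d ∧ B.d ∈ Set.Ioo A.c A.d := by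
    rcases h3 with h3 | h3 <;> rcases h3' with h3' | h3' <;>
      first
        | (exact absurd (h3.trans h3'.symm) hy)
        | (constructor <;> [rw [← h3]; rw [← h3']] <;> assumption)
        | (constructor <;> [rw [← h3']; rw [← h3]] <;> assumption)
  obtain ⟨⟨hc1, hc2⟩, ⟨hd1, hd2⟩⟩ := hcd
  obtain ⟨hs1, hs2⟩ := h4
  cases d' <;> simp only [sel_false, sel_true] at hs1 hs2 <;> linarith

lemma PB_inj {p p' : ℝ × ℝ} {e' d : Bool} {A B : AxisRect}
    (h : PB p e' d A B) (h' : PB p' e' d A B) : p = p' := by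
  obtain ⟨h1, h2, h3, h4, h5⟩ := h
  obtain ⟨h1', h2', h3', h4', h5'⟩ := h'
  have hy : p.2 = p'.2 := h1.trans h1'.symm
  by_cases hx : p.1 = p'.1
  · exact Prod.ext hx hy
  exfalso
  have hab : B.a ∈ Set.Ioo A.a A.b ∧ B.b ∈ Set.Ioo A.a A.b := by
    rcases h3 with h3 | h3 <;> rcases h3' with h3' | h3' <;>
      first
        | (exact absurd (h3.trans h3'.symm) hx)
        | (constructor <;> [rw [← h3]; rw [← h3']] <;> assumption)
        | (constructor <;> [rw [← h3']; rw [← h3]] <;> assumption)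
  obtain ⟨⟨hc1, hc2⟩, ⟨hd1, hd2⟩⟩ := hab
  obtain ⟨hs1, hs2⟩ := h4
  cases e' <;> simp only [sel_false, sel_true] at hs1 hs2 <;> linarith

lemma exists_charge {p : ℝ × ℝ} (A B : AxisRect)
    (hg : GenPosPair A B) (hnAB : ¬ A.Cross B)
    (h1 : p.1 = A.a ∨ p.1 = A.b) (h2 : p.2 ∈ Set.Icc A.c A.d)
    (h3 : p.1 ∈ Set.Icc B.a B.b) (h4 : p.2 = B.c ∨ p.2 = B.d) :
    (∃ e d', PA p e d' A B ∧ (sel e A.a A.b, sel d' A.c A.d) ∈ B.toSet) ∨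
    (∃ e' d, PB p e' d B A ∧ (sel e' B.a B.b, sel d B.c B.d) ∈ A.toSet) := by
  obtain ⟨g1, g2, g3, g4, g5, g6, g7, g8⟩ := hg
  have h2' : p.2 ∈ Set.Ioo A.c A.d := by
    rcases h4 with h4 | h4
    · exact ⟨lt_of_le_of_ne h2.1 (fun hh => g5 (hh.trans h4)),
             lt_of_le_of_ne h2.2 (fun hh => g7 (hh.symm.trans h4))⟩
    · exact ⟨lt_of_le_of_ne h2.1 (fun hh => g6 (hh.trans h4)),
             lt_of_le_of_ne h2.2 (fun hh => g8 (hh.symm.trans h4))⟩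
  have h3' : p.1 ∈ Set.Ioo B.a B.b := by
    rcases h1 with h1 | h1
    · exact ⟨lt_of_le_of_ne h3.1 (fun hh => g1 (h1.symm.trans hh.symm)),
             lt_of_le_of_ne h3.2 (fun hh => g2 (h1.symm.trans hh))⟩
    · exact ⟨lt_of_le_of_ne h3.1 (fun hh => g3 (h1.symm.trans hh.symm)),
             lt_of_le_of_ne h3.2 (fun hh => g4 (h1.symm.trans hh))⟩
  have he : ∃ e, p.1 = sel e A.a A.b := by
    rcases h1 with h1 | h1
    · exact ⟨false, h1⟩
    · exact ⟨true, h1⟩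
  have hd : ∃ d, p.2 = sel d B.c B.d := by
    rcases h4 with h4 | h4
    · exact ⟨false, h4⟩
    · exact ⟨true, h4⟩
  obtain ⟨e, he⟩ := he
  obtain ⟨d, hd⟩ := hd
  by_cases hc : A.c ∈ Set.Icc B.c B.d
  · exact Or.inl ⟨e, false, ⟨he, h2', h4, by simpa using hc, h3⟩,
      ⟨by rw [← he]; exact h3, by simpa [AxisRect.Y] using hc⟩⟩
  by_cases hdtop : A.d ∈ Set.Icc B.c B.d
  · exact Or.inl ⟨e, true, ⟨he, h2', h4, by simpa using hdtop, h3⟩,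
      ⟨by rw [← he]; exact h3, by simpa [AxisRect.Y] using hdtop⟩⟩
  by_cases ha : B.a ∈ Set.Icc A.a A.b
  · exact Or.inr ⟨false, d, ⟨hd, h3', h1, by simpa using ha, h2⟩,
      ⟨by simpa [AxisRect.X] using ha, by rw [← hd]; exact h2⟩⟩
  by_cases hb : B.b ∈ Set.Icc A.a A.b
  · exact Or.inr ⟨true, d, ⟨hd, h3', h1, by simpa using hb, h2⟩,
      ⟨by simpa [AxisRect.X] using hb, by rw [← hd]; exact h2⟩⟩
  exfalso
  apply hnAB
  have hcB : B.c ≤ p.2 ∧ p.2 ≤ B.d := by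
    rcases h4 with h4 | h4 <;> rw [h4] <;>
      exact ⟨by linarith [B.hcd], by linarith [B.hcd]⟩
  have haA : A.a ≤ p.1 ∧ p.1 ≤ A.b := by
    rcases h1 with h1 | h1 <;> rw [h1] <;>
      exact ⟨by linarith [A.hab], by linarith [A.hab]⟩
  have hc' : A.c < B.c := by
    rcases lt_or_ge A.c B.c with h | h
    · exact h
    · exact absurd (Set.mem_Icc.2 ⟨h, by linarith [h2'.1, hcB.2]⟩) hc
  have hd' : B.d < A.d := by
    rcases lt_or_ge B.d A.d with h | h
    · exact h
    · exact absurd (Set.mem_Icc.2 ⟨by linarith [h2'.2, hcB.1], h⟩) hdtop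
  have ha' : B.a < A.a := by
    rcases lt_or_ge B.a A.a with h | h
    · exact h
    · exact absurd (Set.mem_Icc.2 ⟨h, by linarith [h3'.1, haA.2]⟩) ha
  have hb' : A.b < B.b := by
    rcases lt_or_ge A.b B.b with h | h
    · exact h
    · exact absurd (Set.mem_Icc.2 ⟨by linarith [h3'.2, haA.1], h⟩) hb
  left
  constructor
  · rw [Set.ssubset_def]
    refine ⟨Set.Icc_subset_Icc ha'.le hb'.le, fun hsub => ?_⟩
    have := hsub (Set.left_mem_Icc.2 B.hab.le)
    rw [AxisRect.X, Set.mem_Icc] at this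
    linarith [this.1]
  · rw [Set.ssubset_def]
    refine ⟨Set.Icc_subset_Icc hc'.le hd'.le, fun hsub => ?_⟩
    have := hsub (Set.left_mem_Icc.2 A.hcd.le)
    rw [AxisRect.Y, Set.mem_Icc] at this
    linarith [this.1]

def Good {n : ℕ} (R : Fin n → AxisRect) (p : ℝ × ℝ)
    (t : Bool × Bool × Bool × Fin n × Fin n) : Prop :=
  (t.1 = true ∧ PA p t.2.1 t.2.2.1 (R t.2.2.2.1) (R t.2.2.2.2)) ∨
  (t.1 = false ∧ PB p t.2.1 t.2.2.1 (R t.2.2.2.1) (R t.2.2.2.2))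

lemma Good_inj {n : ℕ} {R : Fin n → AxisRect} {p p' : ℝ × ℝ}
    {t : Bool × Bool × Bool × Fin n × Fin n}
    (h : Good R p t) (h' : Good R p' t) : p = p' := by
  rcases h with ⟨hb, h⟩ | ⟨hb, h⟩ <;> rcases h' with ⟨hb', h'⟩ | ⟨hb', h'⟩
  · exact PA_inj h h'
  · rw [hb] at hb'; exact absurd hb' (by simp)
  · rw [hb] at hb'; exact absurd hb' (by simp)
  · exact PB_inj h h'

end JointAux

open JointAux

/-- **Arrangement graph size.** If no two rectangles of a family of `n` rectangles in
general position cross and no `q + 1` of them pairwise intersect, then the number of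
joints (points lying on the boundaries of at least two distinct rectangles) is at most
`8 (q - 1) n`. -/
theorem joint_count (q n : ℕ) (hq : 1 ≤ q) (R : Fin n → AxisRect)
    (hgp : ∀ i j : Fin n, i ≠ j → GenPosPair (R i) (R j))
    (hnc : ∀ i j : Fin n, ¬ AxisRect.Cross (R i) (R j))
    (hclique : ∀ S : Finset (Fin n),
      (∀ i ∈ S, ∀ j ∈ S, ((R i).toSet ∩ (R j).toSet).Nonempty) → S.card ≤ q) :
    ({p : ℝ × ℝ | ∃ i j : Fin n, i ≠ j ∧
        p ∈ frontier (R i).toSet ∧ p ∈ frontier (R j).toSet}).ncard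
      ≤ 8 * (q - 1) * n := by
  classical
  rcases Nat.eq_zero_or_pos n with rfl | hn
  · have hemp : ({p : ℝ × ℝ | ∃ i j : Fin 0, i ≠ j ∧
        p ∈ frontier (R i).toSet ∧ p ∈ frontier (R j).toSet}) = ∅ := by
      ext p
      simp only [Set.mem_setOf_eq, Set.mem_empty_iff_false, iff_false]
      rintro ⟨i, -⟩
      exact i.elim0
    rw [hemp]
    simp
  -- the charge target set
  set Bset : Finset (Bool × Bool × Bool × Fin n × Fin n) :=
    Finset.univ.filter (fun t => t.2.2.2.1 ≠ t.2.2.2.2 ∧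
      (sel t.2.1 (R t.2.2.2.1).a (R t.2.2.2.1).b,
        sel t.2.2.1 (R t.2.2.2.1).c (R t.2.2.2.1).d) ∈ (R t.2.2.2.2).toSet) with hBset
  -- every joint admits a charge in Bset
  have hex : ∀ p ∈ ({p : ℝ × ℝ | ∃ i j : Fin n, i ≠ j ∧
      p ∈ frontier (R i).toSet ∧ p ∈ frontier (R j).toSet}),
      ∃ t, t ∈ Bset ∧ Good R p t := by
    rintro p ⟨i, j, hij, hfi, hfj⟩
    rw [mem_frontier_axisRect] at hfi hfj
    obtain ⟨g1, g2, g3, g4, g5, g6, g7, g8⟩ := hgp i j hij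
    rcases hfi with ⟨hi1, hi2⟩ | ⟨hi1, hi2⟩ <;> rcases hfj with ⟨hj1, hj2⟩ | ⟨hj1, hj2⟩
    · -- vertical-vertical: impossible
      exfalso
      rcases hi1 with h | h <;> rcases hj1 with h' | h'
      · exact g1 (h.symm.trans h')
      · exact g2 (h.symm.trans h')
      · exact g3 (h.symm.trans h')
      · exact g4 (h.symm.trans h')
    · -- vertical edge of i, horizontal edge of j
      rcases exists_charge (R i) (R j) ⟨g1,g2,g3,g4,g5,g6,g7,g8⟩ (hnc i j)
          hi1 hi2 hj1 hj2 with ⟨e, d', hPA, hcor⟩ | ⟨e', d, hPB, hcor⟩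
      · exact ⟨(true, e, d', i, j),
          by simp only [hBset, Finset.mem_filter, Finset.mem_univ, true_and]; exact ⟨hij, hcor⟩,
          Or.inl ⟨rfl, hPA⟩⟩
      · exact ⟨(false, e', d, j, i),
          by simp only [hBset, Finset.mem_filter, Finset.mem_univ, true_and];
             exact ⟨hij.symm, hcor⟩,
          Or.inr ⟨rfl, hPB⟩⟩
    · -- horizontal edge of i, vertical edge of j
      obtain ⟨k1, k2, k3, k4, k5, k6, k7, k8⟩ := hgp j i hij.symm
      rcases exists_charge (R j) (R i) ⟨k1,k2,k3,k4,k5,k6,k7,k8⟩ (hnc j i)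
          hj1 hj2 hi1 hi2 with ⟨e, d', hPA, hcor⟩ | ⟨e', d, hPB, hcor⟩
      · exact ⟨(true, e, d', j, i),
          by simp only [hBset, Finset.mem_filter, Finset.mem_univ, true_and];
             exact ⟨hij.symm, hcor⟩,
          Or.inl ⟨rfl, hPA⟩⟩
      · exact ⟨(false, e', d, i, j),
          by simp only [hBset, Finset.mem_filter, Finset.mem_univ, true_and]; exact ⟨hij, hcor⟩,
          Or.inr ⟨rfl, hPB⟩⟩
    · -- horizontal-horizontal: impossible
      exfalso
      rcases hi2 with h | h <;> rcases hj2 with h' | h'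
      · exact g5 (h.symm.trans h')
      · exact g6 (h.symm.trans h')
      · exact g7 (h.symm.trans h')
      · exact g8 (h.symm.trans h')
  -- injection into Bset
  have hne : Nonempty (Bool × Bool × Bool × Fin n × Fin n) :=
    ⟨(true, true, true, ⟨0, hn⟩, ⟨0, hn⟩)⟩
  set f : ℝ × ℝ → Bool × Bool × Bool × Fin n × Fin n := fun p =>
    if h : ∃ t, t ∈ Bset ∧ Good R p t then h.choose else Classical.arbitrary _ with hf
  have hmaps : ∀ p ∈ ({p : ℝ × ℝ | ∃ i j : Fin n, i ≠ j ∧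
      p ∈ frontier (R i).toSet ∧ p ∈ frontier (R j).toSet}), f p ∈ (↑Bset : Set _) := by
    intro p hp
    have h := hex p hp
    rw [hf]
    simp only [dif_pos h]
    exact h.choose_spec.1
  have hinj : Set.InjOn f ({p : ℝ × ℝ | ∃ i j : Fin n, i ≠ j ∧
      p ∈ frontier (R i).toSet ∧ p ∈ frontier (R j).toSet}) := by
    intro p hp p' hp' heq
    have h := hex p hp
    have h' := hex p' hp'
    rw [hf] at heq
    simp only [dif_pos h, dif_pos h'] at heq
    exact Good_inj (heq ▸ h.choose_spec.2) h'.choose_spec.2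
  have hstep := Set.ncard_le_ncard_of_injOn f hmaps hinj Bset.finite_toSet
  rw [Set.ncard_coe_finset] at hstep
  -- now bound Bset.card
  have hkey : ∀ (s : Fin n) (v : ℝ × ℝ), v ∈ (R s).toSet →
      (Finset.univ.filter (fun t : Fin n => t ≠ s ∧ v ∈ (R t).toSet)).card ≤ q - 1 := by
    intro s v hv
    have hQ : (Finset.univ.filter (fun t : Fin n => v ∈ (R t).toSet)).card ≤ q := by
      apply hclique
      intro i hi j hj
      simp only [Finset.mem_filter] at hi hj
      exact ⟨v, hi.2, hj.2⟩
    have hsmem : s ∈ Finset.univ.filter (fun t : Fin n => v ∈ (R t).toSet) := by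
      simp [hv]
    calc (Finset.univ.filter (fun t : Fin n => t ≠ s ∧ v ∈ (R t).toSet)).card
        ≤ ((Finset.univ.filter (fun t : Fin n => v ∈ (R t).toSet)).erase s).card := by
          apply Finset.card_le_card
          intro t ht
          simp only [Finset.mem_filter, Finset.mem_univ, true_and] at ht
          exact Finset.mem_erase.2 ⟨ht.1, by simp [ht.2]⟩
      _ = (Finset.univ.filter (fun t : Fin n => v ∈ (R t).toSet)).card - 1 :=
          Finset.card_erase_of_mem hsmem
      _ ≤ q - 1 := Nat.sub_le_sub_right hQ 1
  have hcard : Bset.card ≤ (q - 1) * ((Bset.image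
      (fun t : Bool × Bool × Bool × Fin n × Fin n => (t.1, t.2.1, t.2.2.1, t.2.2.2.1))).card) := by
    apply Finset.card_le_mul_card_image
    intro b hb
    refine le_trans (Finset.card_le_card_of_injOn
      (fun t : Bool × Bool × Bool × Fin n × Fin n => t.2.2.2.2) ?_ ?_)
      (hkey b.2.2.2 (sel b.2.1 (R b.2.2.2).a (R b.2.2.2).b,
        sel b.2.2.1 (R b.2.2.2).c (R b.2.2.2).d) (corner_mem_self (R b.2.2.2) b.2.1 b.2.2.1))
    · intro t ht
      simp only [Finset.mem_coe, Finset.mem_filter] at ht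
      obtain ⟨htB, hproj⟩ := ht
      simp only [hBset, Finset.mem_filter, Finset.mem_univ, true_and] at htB
      have h1 : t.1 = b.1 := congrArg (fun x => x.1) hproj
      have h2 : t.2.1 = b.2.1 := congrArg (fun x => x.2.1) hproj
      have h3 : t.2.2.1 = b.2.2.1 := congrArg (fun x => x.2.2.1) hproj
      have h4 : t.2.2.2.1 = b.2.2.2 := congrArg (fun x => x.2.2.2) hproj
      simp only [Finset.mem_coe, Finset.mem_filter, Finset.mem_univ, true_and]
      rw [h2, h3, h4] at htB
      exact ⟨fun hh => htB.1 hh.symm, htB.2⟩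
    · intro t ht t' ht' heq
      simp only [Finset.coe_filter, Set.mem_setOf_eq] at ht ht'
      have p1 : t.1 = t'.1 :=
        (congrArg (fun x : Bool × Bool × Bool × Fin n => x.1) ht.2).trans
          (congrArg (fun x : Bool × Bool × Bool × Fin n => x.1) ht'.2).symm
      have p2 : t.2.1 = t'.2.1 :=
        (congrArg (fun x : Bool × Bool × Bool × Fin n => x.2.1) ht.2).trans
          (congrArg (fun x : Bool × Bool × Bool × Fin n => x.2.1) ht'.2).symm
      have p3 : t.2.2.1 = t'.2.2.1 :=
        (congrArg (fun x : Bool × Bool × Bool × Fin n => x.2.2.1) ht.2).trans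
          (congrArg (fun x : Bool × Bool × Bool × Fin n => x.2.2.1) ht'.2).symm
      have p4 : t.2.2.2.1 = t'.2.2.2.1 :=
        (congrArg (fun x : Bool × Bool × Bool × Fin n => x.2.2.2) ht.2).trans
          (congrArg (fun x : Bool × Bool × Bool × Fin n => x.2.2.2) ht'.2).symm
      exact Prod.ext p1 (Prod.ext p2 (Prod.ext p3 (Prod.ext p4 heq)))
  -- finish
  have himg : ((Bset.image
      (fun t : Bool × Bool × Bool × Fin n × Fin n => (t.1, t.2.1, t.2.2.1, t.2.2.2.1))).card)
      ≤ 2 * (2 * (2 * n)) := by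
    refine le_trans (Finset.card_le_univ _) ?_
    simp [Finset.card_univ]
  calc ({p : ℝ × ℝ | ∃ i j : Fin n, i ≠ j ∧
        p ∈ frontier (R i).toSet ∧ p ∈ frontier (R j).toSet}).ncard
      ≤ Bset.card := hstep
    _ ≤ (q - 1) * ((Bset.image
        (fun t : Bool × Bool × Bool × Fin n × Fin n => (t.1, t.2.1, t.2.2.1, t.2.2.2.1))).card) :=
        hcard
    _ ≤ (q - 1) * (2 * (2 * (2 * n))) := Nat.mul_le_mul_left _ himg
    _ = 8 * (q - 1) * n := by ring
end

section
/- Let R1 and R2 be two distinct axis-parallel rectangles in general position. Then R1 and R2 cross if and only if the set difference R1 \ R2 is not a preconnected subset of ℝ². In particular, for non-crossing pairs (disjoint pairs, containment intersections, and corner intersections) R1 \ R2 is preconnected. -/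
open Set

section Aux

lemma diff_prod_eq (X1 Y1 X2 Y2 : Set ℝ) :
    (X1 ×ˢ Y1) \ (X2 ×ˢ Y2) = (X1 \ X2) ×ˢ Y1 ∪ X1 ×ˢ (Y1 \ Y2) := by
  ext ⟨x, y⟩
  simp only [mem_diff, mem_prod, mem_union]
  tauto

lemma Icc_diff_empty' {a b p q : ℝ} (h1 : p ≤ a) (h2 : b ≤ q) :
    Icc a b \ Icc p q = (∅ : Set ℝ) :=
  diff_eq_empty.mpr (Icc_subset_Icc h1 h2)

lemma Icc_diff_Ico' {a b p q : ℝ} (hp : p ≤ b) (hq : b < q) :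
    Icc a b \ Icc p q = Ico a p := by
  ext x
  simp only [mem_diff, mem_Icc, mem_Ico, not_and, not_le]
  constructor
  · rintro ⟨⟨h1, h2⟩, h3⟩
    refine ⟨h1, ?_⟩
    by_contra h
    push_neg at h
    have := h3 h
    linarith
  · rintro ⟨h1, h2⟩
    exact ⟨⟨h1, by linarith⟩, fun hp' => by linarith⟩

lemma Icc_diff_Ioc' {a b p q : ℝ} (hp : p < a) (hq : a ≤ q) :
    Icc a b \ Icc p q = Ioc q b := by
  ext x
  simp only [mem_diff, mem_Icc, mem_Ioc, not_and, not_le]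
  constructor
  · rintro ⟨⟨h1, h2⟩, h3⟩
    exact ⟨h3 (by linarith), h2⟩
  · rintro ⟨h1, h2⟩
    exact ⟨⟨by linarith, h2⟩, fun _ => h1⟩

lemma Icc_diff_union' {a b p q : ℝ} (hp : p ≤ b) (hq : a ≤ q) :
    Icc a b \ Icc p q = Ico a p ∪ Ioc q b := by
  ext x
  simp only [mem_diff, mem_Icc, mem_Ico, mem_Ioc, mem_union, not_and, not_le]
  constructor
  · rintro ⟨⟨h1, h2⟩, h3⟩
    by_cases h : p ≤ x
    · exact Or.inr ⟨h3 h, h2⟩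
    · push_neg at h
      exact Or.inl ⟨h1, h⟩
  · rintro (⟨h1, h2⟩ | ⟨h1, h2⟩)
    · exact ⟨⟨h1, by linarith⟩, fun hp' => by linarith⟩
    · exact ⟨⟨by linarith, h2⟩, fun _ => h1⟩

lemma Icc_ssub' {a b p q : ℝ} (hab : a < b) (h1 : p < a) (h2 : b < q) :
    Icc a b ⊂ Icc p q := by
  constructor
  · exact Icc_subset_Icc h1.le h2.le
  · intro hsub
    have := (Icc_subset_Icc_iff (by linarith : p ≤ q)).mp hsub
    linarith

lemma glue3l {P1 P2 Q : Set (ℝ × ℝ)} (w1 w2 : ℝ × ℝ)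
    (h11 : w1 ∈ P1) (h12 : w1 ∈ Q) (h21 : w2 ∈ P2) (h22 : w2 ∈ Q)
    (hP1 : IsPreconnected P1) (hP2 : IsPreconnected P2) (hQ : IsPreconnected Q) :
    IsPreconnected ((P1 ∪ P2) ∪ Q) := by
  have he : (P1 ∪ P2) ∪ Q = (P1 ∪ Q) ∪ P2 := by ext x; simp only [mem_union]; tauto
  rw [he]
  exact (hP1.union w1 h11 h12 hQ).union w2 (Or.inr h22) h21 hP2

lemma glue3r {P Q1 Q2 : Set (ℝ × ℝ)} (w1 w2 : ℝ × ℝ)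
    (h11 : w1 ∈ P) (h12 : w1 ∈ Q1) (h21 : w2 ∈ P) (h22 : w2 ∈ Q2)
    (hP : IsPreconnected P) (hQ1 : IsPreconnected Q1) (hQ2 : IsPreconnected Q2) :
    IsPreconnected (P ∪ (Q1 ∪ Q2)) := by
  have he : P ∪ (Q1 ∪ Q2) = (P ∪ Q1) ∪ Q2 := by ext x; simp only [mem_union]; tauto
  rw [he]
  exact (hP.union w1 h11 h12 hQ1).union w2 (Or.inl h21) h22 hQ2

lemma glue4' {P1 P2 Q1 Q2 : Set (ℝ × ℝ)} (w1 w2 w3 : ℝ × ℝ)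
    (h11 : w1 ∈ P1) (h12 : w1 ∈ Q1) (h21 : w2 ∈ P2) (h22 : w2 ∈ Q1)
    (h31 : w3 ∈ P1) (h32 : w3 ∈ Q2)
    (hP1 : IsPreconnected P1) (hP2 : IsPreconnected P2)
    (hQ1 : IsPreconnected Q1) (hQ2 : IsPreconnected Q2) :
    IsPreconnected ((P1 ∪ P2) ∪ (Q1 ∪ Q2)) := by
  have he : (P1 ∪ P2) ∪ (Q1 ∪ Q2) = (((P1 ∪ Q1) ∪ P2) ∪ Q2) := by
    ext x; simp only [mem_union]; tauto
  rw [he]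
  exact (((hP1.union w1 h11 h12 hQ1).union w2 (Or.inr h22) h21 hP2).union
    w3 (Or.inl (Or.inl h31)) h32 hQ2)

end Aux

lemma AxisRect.mem_toSet {R : AxisRect} {x y : ℝ} :
    (x, y) ∈ R.toSet ↔ (R.a ≤ x ∧ x ≤ R.b) ∧ (R.c ≤ y ∧ y ≤ R.d) := Iff.rfl

/-- Two distinct rectangles in general position cross if and only if the set difference
`R1 \ R2` is not a preconnected subset of the plane. In particular, for non-crossing pairs
the difference is preconnected. -/
theorem cross_iff_diff_not_preconnected (R1 R2 : AxisRect) (hne : R1 ≠ R2)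
    (hgp : GenPosPair R1 R2) :
    AxisRect.Cross R1 R2 ↔ ¬ IsPreconnected (R1.toSet \ R2.toSet) := by
  obtain ⟨h1, h2, h3, h4, h5, h6, h7, h8⟩ := hgp
  constructor
  · rintro (⟨hX, hY⟩ | ⟨hX, hY⟩) hpc
    · -- X1 ⊂ X2 and Y2 ⊂ Y1 : separate along the y coordinate
      have hx := (Set.Icc_subset_Icc_iff R1.hab.le).mp hX.subset
      have hy := (Set.Icc_subset_Icc_iff R2.hcd.le).mp hY.subset
      have ha : R2.a < R1.a := lt_of_le_of_ne hx.1 (Ne.symm h1).symm.symm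
      have hb : R1.b < R2.b := lt_of_le_of_ne hx.2 h4
      have hc : R1.c < R2.c := lt_of_le_of_ne hy.1 h5
      have hd : R2.d < R1.d := lt_of_le_of_ne hy.2 (Ne.symm h8).symm.symm
      obtain ⟨p, hps, hpu, hpv⟩ := hpc {q : ℝ × ℝ | q.2 < R2.c} {q : ℝ × ℝ | R2.d < q.2}
        (isOpen_lt continuous_snd continuous_const)
        (isOpen_lt continuous_const continuous_snd)
        (by
          rintro ⟨x, y⟩ ⟨hm, hnot⟩
          rw [AxisRect.mem_toSet] at hm
          simp only [Set.mem_union, Set.mem_setOf_eq]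
          by_contra hcon
          push_neg at hcon
          exact hnot (AxisRect.mem_toSet.mpr
            ⟨⟨by linarith [hm.1.1], by linarith [hm.1.2]⟩,
             ⟨by linarith [hcon.1], by linarith [hcon.2]⟩⟩))
        ⟨(R1.a, R1.c), ⟨AxisRect.mem_toSet.mpr ⟨⟨le_rfl, R1.hab.le⟩, le_rfl, R1.hcd.le⟩,
          fun hm => by have := (AxisRect.mem_toSet.mp hm).2.1; linarith⟩, hc⟩
        ⟨(R1.a, R1.d), ⟨AxisRect.mem_toSet.mpr ⟨⟨le_rfl, R1.hab.le⟩, R1.hcd.le, le_rfl⟩,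
          fun hm => by have := (AxisRect.mem_toSet.mp hm).2.2; linarith⟩, hd⟩
      have hu : p.2 < R2.c := hpu
      have hv : R2.d < p.2 := hpv
      linarith [R2.hcd]
    · -- X2 ⊂ X1 and Y1 ⊂ Y2 : separate along the x coordinate
      have hx := (Set.Icc_subset_Icc_iff R2.hab.le).mp hX.subset
      have hy := (Set.Icc_subset_Icc_iff R1.hcd.le).mp hY.subset
      have ha : R1.a < R2.a := lt_of_le_of_ne hx.1 h1
      have hb : R2.b < R1.b := lt_of_le_of_ne hx.2 (Ne.symm h4).symm.symm
      have hc : R2.c < R1.c := lt_of_le_of_ne hy.1 (Ne.symm h5).symm.symm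
      have hd : R1.d < R2.d := lt_of_le_of_ne hy.2 h8
      obtain ⟨p, hps, hpu, hpv⟩ := hpc {q : ℝ × ℝ | q.1 < R2.a} {q : ℝ × ℝ | R2.b < q.1}
        (isOpen_lt continuous_fst continuous_const)
        (isOpen_lt continuous_const continuous_fst)
        (by
          rintro ⟨x, y⟩ ⟨hm, hnot⟩
          rw [AxisRect.mem_toSet] at hm
          simp only [Set.mem_union, Set.mem_setOf_eq]
          by_contra hcon
          push_neg at hcon
          exact hnot (AxisRect.mem_toSet.mpr
            ⟨⟨by linarith [hcon.1], by linarith [hcon.2]⟩,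
             ⟨by linarith [hm.2.1], by linarith [hm.2.2]⟩⟩))
        ⟨(R1.a, R1.c), ⟨AxisRect.mem_toSet.mpr ⟨⟨le_rfl, R1.hab.le⟩, le_rfl, R1.hcd.le⟩,
          fun hm => by have := (AxisRect.mem_toSet.mp hm).1.1; linarith⟩, ha⟩
        ⟨(R1.b, R1.c), ⟨AxisRect.mem_toSet.mpr ⟨⟨R1.hab.le, le_rfl⟩, le_rfl, R1.hcd.le⟩,
          fun hm => by have := (AxisRect.mem_toSet.mp hm).1.2; linarith⟩, hb⟩
      have hu : p.1 < R2.a := hpu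
      have hv : R2.b < p.1 := hpv
      linarith [R2.hab]
  · intro hnp
    by_contra hnc
    apply hnp
    clear hnp
    -- cases where the projections are disjoint: the difference is all of R1
    have hR1 : IsPreconnected R1.toSet := by
      show IsPreconnected (Set.Icc R1.a R1.b ×ˢ Set.Icc R1.c R1.d)
      exact isPreconnected_Icc.prod isPreconnected_Icc
    rcases lt_or_gt_of_ne h3 with hx1 | hov1
    · -- R1.b < R2.a : disjoint
      have : R1.toSet \ R2.toSet = R1.toSet := by
        ext ⟨x, y⟩
        simp only [Set.mem_diff, and_iff_left_iff_imp]
        intro hm hm2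
        rw [AxisRect.mem_toSet] at hm hm2
        linarith [hm.1.2, hm2.1.1]
      rw [this]; exact hR1
    rcases lt_or_gt_of_ne h2 with hov2 | hx2
    swap
    · -- R2.b < R1.a : disjoint
      have : R1.toSet \ R2.toSet = R1.toSet := by
        ext ⟨x, y⟩
        simp only [Set.mem_diff, and_iff_left_iff_imp]
        intro hm hm2
        rw [AxisRect.mem_toSet] at hm hm2
        linarith [hm.1.1, hm2.1.2]
      rw [this]; exact hR1
    rcases lt_or_gt_of_ne h7 with hy1 | hov3
    · -- R1.d < R2.c : disjoint
      have : R1.toSet \ R2.toSet = R1.toSet := by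
        ext ⟨x, y⟩
        simp only [Set.mem_diff, and_iff_left_iff_imp]
        intro hm hm2
        rw [AxisRect.mem_toSet] at hm hm2
        linarith [hm.2.2, hm2.2.1]
      rw [this]; exact hR1
    rcases lt_or_gt_of_ne h6 with hov4 | hy2
    swap
    · -- R2.d < R1.c : disjoint
      have : R1.toSet \ R2.toSet = R1.toSet := by
        ext ⟨x, y⟩
        simp only [Set.mem_diff, and_iff_left_iff_imp]
        intro hm hm2
        rw [AxisRect.mem_toSet] at hm hm2
        linarith [hm.2.1, hm2.2.2]
      rw [this]; exact hR1
    -- now the projections overlap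
    have key : R1.toSet \ R2.toSet =
        (Set.Icc R1.a R1.b \ Set.Icc R2.a R2.b) ×ˢ Set.Icc R1.c R1.d ∪
        Set.Icc R1.a R1.b ×ˢ (Set.Icc R1.c R1.d \ Set.Icc R2.c R2.d) :=
      diff_prod_eq _ _ _ _
    rw [key]
    rcases lt_or_gt_of_ne h1 with hax | hax <;> rcases lt_or_gt_of_ne h4 with hbx | hbx <;>
      rcases lt_or_gt_of_ne h5 with hcy | hcy <;> rcases lt_or_gt_of_ne h8 with hdy | hdy
    · -- XT3 YT3 : L-shape
      rw [Icc_diff_Ico' hov1.le hbx, Icc_diff_Ico' hov3.le hdy]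
      exact (isPreconnected_Ico.prod isPreconnected_Icc).union (R1.a, R1.c)
        ⟨⟨le_rfl, hax⟩, le_rfl, R1.hcd.le⟩ ⟨⟨le_rfl, R1.hab.le⟩, le_rfl, hcy⟩
        (isPreconnected_Icc.prod isPreconnected_Ico)
    · -- XT3 YT2 : U-shape
      rw [Icc_diff_Ico' hov1.le hbx, Icc_diff_union' hov3.le hov4.le, Set.prod_union]
      exact glue3r (R1.a, R1.c) (R1.a, R1.d)
        ⟨⟨le_rfl, hax⟩, le_rfl, R1.hcd.le⟩ ⟨⟨le_rfl, R1.hab.le⟩, le_rfl, hcy⟩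
        ⟨⟨le_rfl, hax⟩, R1.hcd.le, le_rfl⟩ ⟨⟨le_rfl, R1.hab.le⟩, hdy, le_rfl⟩
        (isPreconnected_Ico.prod isPreconnected_Icc)
        (isPreconnected_Icc.prod isPreconnected_Ico)
        (isPreconnected_Icc.prod isPreconnected_Ioc)
    · -- XT3 YT1 : vertical strip
      rw [Icc_diff_Ico' hov1.le hbx, Icc_diff_empty' hcy.le hdy.le, Set.prod_empty,
        Set.union_empty]
      exact isPreconnected_Ico.prod isPreconnected_Icc
    · -- XT3 YT4 : L-shape
      rw [Icc_diff_Ico' hov1.le hbx, Icc_diff_Ioc' hcy hov4.le]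
      exact (isPreconnected_Ico.prod isPreconnected_Icc).union (R1.a, R1.d)
        ⟨⟨le_rfl, hax⟩, R1.hcd.le, le_rfl⟩ ⟨⟨le_rfl, R1.hab.le⟩, hdy, le_rfl⟩
        (isPreconnected_Icc.prod isPreconnected_Ioc)
    · -- XT2 YT3 : three pieces
      rw [Icc_diff_union' hov1.le hov2.le, Icc_diff_Ico' hov3.le hdy, Set.union_prod]
      exact glue3l (R1.a, R1.c) (R1.b, R1.c)
        ⟨⟨le_rfl, hax⟩, le_rfl, R1.hcd.le⟩ ⟨⟨le_rfl, R1.hab.le⟩, le_rfl, hcy⟩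
        ⟨⟨hbx, le_rfl⟩, le_rfl, R1.hcd.le⟩ ⟨⟨R1.hab.le, le_rfl⟩, le_rfl, hcy⟩
        (isPreconnected_Ico.prod isPreconnected_Icc)
        (isPreconnected_Ioc.prod isPreconnected_Icc)
        (isPreconnected_Icc.prod isPreconnected_Ico)
    · -- XT2 YT2 : annulus
      rw [Icc_diff_union' hov1.le hov2.le, Icc_diff_union' hov3.le hov4.le, Set.union_prod,
        Set.prod_union]
      exact glue4' (R1.a, R1.c) (R1.b, R1.c) (R1.a, R1.d)
        ⟨⟨le_rfl, hax⟩, le_rfl, R1.hcd.le⟩ ⟨⟨le_rfl, R1.hab.le⟩, le_rfl, hcy⟩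
        ⟨⟨hbx, le_rfl⟩, le_rfl, R1.hcd.le⟩ ⟨⟨R1.hab.le, le_rfl⟩, le_rfl, hcy⟩
        ⟨⟨le_rfl, hax⟩, R1.hcd.le, le_rfl⟩ ⟨⟨le_rfl, R1.hab.le⟩, hdy, le_rfl⟩
        (isPreconnected_Ico.prod isPreconnected_Icc)
        (isPreconnected_Ioc.prod isPreconnected_Icc)
        (isPreconnected_Icc.prod isPreconnected_Ico)
        (isPreconnected_Icc.prod isPreconnected_Ioc)
    · -- XT2 YT1 : crossing, contradiction
      exact absurd (Or.inr ⟨Icc_ssub' R2.hab hax hbx, Icc_ssub' R1.hcd hcy hdy⟩) hnc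
    · -- XT2 YT4 : three pieces
      rw [Icc_diff_union' hov1.le hov2.le, Icc_diff_Ioc' hcy hov4.le, Set.union_prod]
      exact glue3l (R1.a, R1.d) (R1.b, R1.d)
        ⟨⟨le_rfl, hax⟩, R1.hcd.le, le_rfl⟩ ⟨⟨le_rfl, R1.hab.le⟩, hdy, le_rfl⟩
        ⟨⟨hbx, le_rfl⟩, R1.hcd.le, le_rfl⟩ ⟨⟨R1.hab.le, le_rfl⟩, hdy, le_rfl⟩
        (isPreconnected_Ico.prod isPreconnected_Icc)
        (isPreconnected_Ioc.prod isPreconnected_Icc)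
        (isPreconnected_Icc.prod isPreconnected_Ioc)
    · -- XT1 YT3 : horizontal strip
      rw [Icc_diff_empty' hax.le hbx.le, Icc_diff_Ico' hov3.le hdy, Set.empty_prod,
        Set.empty_union]
      exact isPreconnected_Icc.prod isPreconnected_Ico
    · -- XT1 YT2 : crossing, contradiction
      exact absurd (Or.inl ⟨Icc_ssub' R1.hab hax hbx, Icc_ssub' R2.hcd hcy hdy⟩) hnc
    · -- XT1 YT1 : empty
      rw [Icc_diff_empty' hax.le hbx.le, Icc_diff_empty' hcy.le hdy.le, Set.empty_prod,
        Set.prod_empty, Set.union_empty]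
      exact isPreconnected_empty
    · -- XT1 YT4 : horizontal strip
      rw [Icc_diff_empty' hax.le hbx.le, Icc_diff_Ioc' hcy hov4.le, Set.empty_prod,
        Set.empty_union]
      exact isPreconnected_Icc.prod isPreconnected_Ioc
    · -- XT4 YT3 : L-shape
      rw [Icc_diff_Ioc' hax hov2.le, Icc_diff_Ico' hov3.le hdy]
      exact (isPreconnected_Ioc.prod isPreconnected_Icc).union (R1.b, R1.c)
        ⟨⟨hbx, le_rfl⟩, le_rfl, R1.hcd.le⟩ ⟨⟨R1.hab.le, le_rfl⟩, le_rfl, hcy⟩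
        (isPreconnected_Icc.prod isPreconnected_Ico)
    · -- XT4 YT2 : U-shape
      rw [Icc_diff_Ioc' hax hov2.le, Icc_diff_union' hov3.le hov4.le, Set.prod_union]
      exact glue3r (R1.b, R1.c) (R1.b, R1.d)
        ⟨⟨hbx, le_rfl⟩, le_rfl, R1.hcd.le⟩ ⟨⟨R1.hab.le, le_rfl⟩, le_rfl, hcy⟩
        ⟨⟨hbx, le_rfl⟩, R1.hcd.le, le_rfl⟩ ⟨⟨R1.hab.le, le_rfl⟩, hdy, le_rfl⟩
        (isPreconnected_Ioc.prod isPreconnected_Icc)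
        (isPreconnected_Icc.prod isPreconnected_Ico)
        (isPreconnected_Icc.prod isPreconnected_Ioc)
    · -- XT4 YT1 : vertical strip
      rw [Icc_diff_Ioc' hax hov2.le, Icc_diff_empty' hcy.le hdy.le, Set.prod_empty,
        Set.union_empty]
      exact isPreconnected_Ioc.prod isPreconnected_Icc

    · -- XT4 YT4 : L-shape
      rw [Icc_diff_Ioc' hax hov2.le, Icc_diff_Ioc' hcy hov4.le]
      exact (isPreconnected_Ioc.prod isPreconnected_Icc).union (R1.b, R1.d)
        ⟨⟨hbx, le_rfl⟩, R1.hcd.le, le_rfl⟩ ⟨⟨R1.hab.le, le_rfl⟩, hdy, le_rfl⟩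
        (isPreconnected_Icc.prod isPreconnected_Ioc)
end
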